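/- Let y_{12}, y_{13}, y_{23|1} ∈ (−1, 1) and define ρ^{12} = y_{12}, ρ^{13} = y_{13} and ρ^{23} = y_{23|1} √((1−y_{12}²)(1−y_{13}²)) + y_{12} y_{13}. Then the 3×3 real symmetric matrix ρ with unit diagonal and off-diagonal entries ρ^{12}, ρ^{13}, ρ^{23} is positive definite; in particular, it is a correlation matrix, and moreover ρ^{23} ∈ (−1, 1). -/

import Mathlib

open Matrix

/-- The C-vine parameterization in dimension 3: for partial correlations
`y₁₂, y₁₃, y₂₃∣₁ ∈ (-1,1)`, setting `ρ²³ = y₂₃∣₁ √((1-y₁₂²)(1-y₁₃²)) + y₁₂ y₁₃`, the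
3×3 symmetric matrix with unit diagonal and off-diagonal entries `y₁₂, y₁₃, ρ²³` is
positive definite (hence a correlation matrix), and `ρ²³ ∈ (-1,1)`. -/
theorem cvine_3d_posDef
    (y12 y13 y231 : ℝ)
    (h12 : y12 ∈ Set.Ioo (-1 : ℝ) 1) (h13 : y13 ∈ Set.Ioo (-1 : ℝ) 1)
    (h231 : y231 ∈ Set.Ioo (-1 : ℝ) 1) :
    (!![1, y12, y13;
        y12, 1, y231 * Real.sqrt ((1 - y12 ^ 2) * (1 - y13 ^ 2)) + y12 * y13;
        y13, y231 * Real.sqrt ((1 - y12 ^ 2) * (1 - y13 ^ 2)) + y12 * y13, 1] :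
      Matrix (Fin 3) (Fin 3) ℝ).PosDef ∧
    y231 * Real.sqrt ((1 - y12 ^ 2) * (1 - y13 ^ 2)) + y12 * y13 ∈ Set.Ioo (-1 : ℝ) 1 := by
  obtain ⟨h12l, h12r⟩ := h12
  obtain ⟨h13l, h13r⟩ := h13
  obtain ⟨hl, hr⟩ := h231
  set s := Real.sqrt ((1 - y12 ^ 2) * (1 - y13 ^ 2)) with hs_def
  have ha : (0:ℝ) < 1 - y12 ^ 2 := by nlinarith
  have hb : (0:ℝ) < 1 - y13 ^ 2 := by nlinarith
  have hs2 : s ^ 2 = (1 - y12 ^ 2) * (1 - y13 ^ 2) := by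
    rw [hs_def, Real.sq_sqrt (by positivity)]
  have hs : 0 < s := by
    rw [hs_def]; exact Real.sqrt_pos.mpr (by positivity)
  constructor
  · rw [Matrix.posDef_iff_dotProduct_mulVec]
    constructor
    · ext i j
      fin_cases i <;> fin_cases j <;> simp [Matrix.conjTranspose, Matrix.vecHead, Matrix.vecTail]
    · intro x hx
      have hx' : x 0 ≠ 0 ∨ x 1 ≠ 0 ∨ x 2 ≠ 0 := by
        by_contra h
        push_neg at h
        exact hx (funext fun i => by fin_cases i <;> simp [h.1, h.2.1, h.2.2])
      set a0 := x 0; set a1 := x 1; set a2 := x 2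
      have hq : star x ⬝ᵥ ((!![1, y12, y13;
          y12, 1, y231 * s + y12 * y13;
          y13, y231 * s + y12 * y13, 1] : Matrix (Fin 3) (Fin 3) ℝ) *ᵥ x)
          = a0^2 + a1^2 + a2^2 + 2*y12*a0*a1 + 2*y13*a0*a2
            + 2*(y231*s + y12*y13)*a1*a2 := by
        simp [dotProduct, Matrix.mulVec, Fin.sum_univ_three]
        ring
      rw [hq]
      rcases eq_or_ne a2 0 with h2 | h2
      · rcases eq_or_ne a1 0 with h1 | h1
        · have h0 : a0 ≠ 0 := by
            rcases hx' with h | h | h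
            · exact h
            · exact absurd h1 h
            · exact absurd h2 h
          rw [h1, h2]
          nlinarith [sq_pos_of_ne_zero h0]
        · rw [h2]
          nlinarith [sq_nonneg (a0 + y12*a1), mul_pos ha (sq_pos_of_ne_zero h1)]
      · have h1y : (0:ℝ) < 1 - y231 ^ 2 := by nlinarith
        have hB : 0 < (1 - y12^2)*a1^2 + (1 - y13^2)*a2^2 + 2*y231*s*a1*a2 := by
          nlinarith [sq_nonneg ((1 - y12^2)*a1 + y231*s*a2),
            mul_pos (mul_pos h1y (pow_pos hs 2)) (sq_pos_of_ne_zero h2),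
            sq_nonneg a2, mul_pos ha hb]
        nlinarith [sq_nonneg (a0 + y12*a1 + y13*a2), hB]
  · constructor
    · nlinarith [sq_nonneg (y12 + y13), mul_pos hs (by linarith : (0:ℝ) < 1 + y231)]
    · nlinarith [sq_nonneg (y12 - y13), mul_pos hs (by linarith : (0:ℝ) < 1 - y231)]
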